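/- The series whose terms are 1/( (a² + b²)·(c² + d²)·((a+c)² + (b+d)²) ), summed over all quadruples (a,b,c,d) of nonnegative integers with a·d − b·c = 1, converges and its sum equals π/4. Equivalently, 4·∑_{(x,y)} 1/( ‖x‖²·‖y‖²·‖x+y‖² ) = π, where the sum is over pairs of vectors x, y ∈ ℤ² with nonnegative coordinates spanning lattice parallelograms of oriented area one. -/

import Mathlib

set_option maxRecDepth 8000
set_option maxHeartbeats 1000000

/-- Quadruples `(a,b,c,d)` of nonnegative integers with `a·d − b·c = 1`. -/
def T : Set (ℤ × ℤ × ℤ × ℤ) :=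
  {p | 0 ≤ p.1 ∧ 0 ≤ p.2.1 ∧ 0 ≤ p.2.2.1 ∧ 0 ≤ p.2.2.2 ∧
    p.1 * p.2.2.2 - p.2.1 * p.2.2.1 = 1}

open Complex Real ComplexConjugate

noncomputable section

abbrev Q := ℤ × ℤ × ℤ × ℤ

def Good (p : Q) : Prop :=
  0 ≤ p.1 ∧ 0 ≤ p.2.1 ∧ 0 ≤ p.2.2.1 ∧ 0 ≤ p.2.2.2 ∧
    p.1 * p.2.2.2 - p.2.1 * p.2.2.1 = 1

def cL (p : Q) : Q := (p.1, p.2.1, p.1 + p.2.2.1, p.2.1 + p.2.2.2)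
def cR (p : Q) : Q := (p.1 + p.2.2.1, p.2.1 + p.2.2.2, p.2.2.1, p.2.2.2)

def X (p : Q) : ℝ := (p.1:ℝ)^2 + (p.2.1:ℝ)^2
def Y (p : Q) : ℝ := (p.2.2.1:ℝ)^2 + (p.2.2.2:ℝ)^2
def Z (p : Q) : ℝ := ((p.1:ℝ)+(p.2.2.1:ℝ))^2 + ((p.2.1:ℝ)+(p.2.2.2:ℝ))^2
def f (p : Q) : ℝ := 1 / (X p * Y p * Z p)
def φ (p : Q) : ℝ := ((p.1:ℝ)*(p.2.2.1:ℝ) + (p.2.1:ℝ)*(p.2.2.2:ℝ)) / (X p * Y p)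

def zz (p : Q) : ℂ := (p.1:ℝ) + (p.2.1:ℝ) * I
def ww (p : Q) : ℂ := (p.2.2.1:ℝ) + (p.2.2.2:ℝ) * I
def ζ (p : Q) : ℂ := ww p * conj (zz p)
def ψ (p : Q) : ℝ := (ζ p).arg

lemma good_cL {p : Q} (hp : Good p) : Good (cL p) := by
  obtain ⟨h1, h2, h3, h4, h5⟩ := hp
  simp only [cL, Good]
  refine ⟨h1, h2, by omega, by omega, ?_⟩
  ring_nf; linear_combination h5

lemma good_cR {p : Q} (hp : Good p) : Good (cR p) := by
  obtain ⟨h1, h2, h3, h4, h5⟩ := hp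
  simp only [cR, Good]
  refine ⟨by omega, by omega, h3, h4, ?_⟩
  ring_nf; linear_combination h5

lemma good_a {p : Q} (hp : Good p) : 1 ≤ p.1 := by
  obtain ⟨h1, h2, h3, h4, h5⟩ := hp; nlinarith
lemma good_d {p : Q} (hp : Good p) : 1 ≤ p.2.2.2 := by
  obtain ⟨h1, h2, h3, h4, h5⟩ := hp; nlinarith

lemma X_ge {p : Q} (hp : Good p) : 1 ≤ X p := by
  have := good_a hp
  have h2 : (1:ℝ) ≤ (p.1:ℝ) := by exact_mod_cast this
  have : (0:ℝ) ≤ (p.2.1:ℝ)^2 := sq_nonneg _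
  unfold X; nlinarith

lemma Y_ge {p : Q} (hp : Good p) : 1 ≤ Y p := by
  have := good_d hp
  have h2 : (1:ℝ) ≤ (p.2.2.2:ℝ) := by exact_mod_cast this
  have : (0:ℝ) ≤ (p.2.2.1:ℝ)^2 := sq_nonneg _
  unfold Y; nlinarith

lemma Z_eq (p : Q) : Z p = X p + 2*((p.1:ℝ)*(p.2.2.1:ℝ) + (p.2.1:ℝ)*(p.2.2.2:ℝ)) + Y p := by
  unfold X Y Z; ring

lemma ip_nonneg {p : Q} (hp : Good p) :
    0 ≤ (p.1:ℝ)*(p.2.2.1:ℝ) + (p.2.1:ℝ)*(p.2.2.2:ℝ) := by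
  obtain ⟨h1, h2, h3, h4, h5⟩ := hp
  have := mul_nonneg (show (0:ℝ) ≤ (p.1:ℝ) by exact_mod_cast h1) (show (0:ℝ) ≤ (p.2.2.1:ℝ) by exact_mod_cast h3)
  have := mul_nonneg (show (0:ℝ) ≤ (p.2.1:ℝ) by exact_mod_cast h2) (show (0:ℝ) ≤ (p.2.2.2:ℝ) by exact_mod_cast h4)
  linarith

lemma Z_ge {p : Q} (hp : Good p) : 2 ≤ Z p := by
  have := Z_eq p
  have := ip_nonneg hp
  have := X_ge hp
  have := Y_ge hp
  linarith

lemma X_pos {p : Q} (hp : Good p) : 0 < X p := lt_of_lt_of_le one_pos (X_ge hp)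
lemma Y_pos {p : Q} (hp : Good p) : 0 < Y p := lt_of_lt_of_le one_pos (Y_ge hp)
lemma Z_pos {p : Q} (hp : Good p) : 0 < Z p := lt_of_lt_of_le two_pos (Z_ge hp)

lemma ζ_re (p : Q) : (ζ p).re = (p.1:ℝ)*(p.2.2.1:ℝ) + (p.2.1:ℝ)*(p.2.2.2:ℝ) := by
  simp [ζ, ww, zz, Complex.mul_re]; ring

lemma ζ_im {p : Q} (hp : Good p) : (ζ p).im = 1 := by
  have h5 := hp.2.2.2.2
  have h : ((p.1:ℝ) * (p.2.2.2:ℝ) - (p.2.1:ℝ) * (p.2.2.1:ℝ)) = 1 := by exact_mod_cast h5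
  simp [ζ, ww, zz, Complex.mul_im]; linarith

lemma ζ_ne {p : Q} (hp : Good p) : ζ p ≠ 0 := by
  intro h
  have := ζ_im hp
  rw [h] at this; simp at this

lemma abs_ζ_sq {p : Q} (hp : Good p) : (‖ζ p‖)^2 = X p * Y p := by
  rw [Complex.sq_norm, ζ, Complex.normSq_mul, Complex.normSq_conj]
  simp [Complex.normSq_apply, ww, zz, X, Y]
  ring

lemma sin_ψ {p : Q} (hp : Good p) : Real.sin (ψ p) = 1 / ‖ζ p‖ := by
  rw [ψ, Complex.sin_arg, ζ_im hp]

lemma cos_ψ {p : Q} (hp : Good p) :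
    Real.cos (ψ p) = ((p.1:ℝ)*(p.2.2.1:ℝ) + (p.2.1:ℝ)*(p.2.2.2:ℝ)) / ‖ζ p‖ := by
  rw [ψ, Complex.cos_arg (ζ_ne hp), ζ_re]

lemma abs_ζ_pos {p : Q} (hp : Good p) : 0 < ‖ζ p‖ :=
  norm_pos_iff.mpr (ζ_ne hp)

lemma ψ_pos {p : Q} (hp : Good p) : 0 < ψ p := by
  have h0 : 0 ≤ ψ p := Complex.arg_nonneg_iff.2 (by rw [ζ_im hp]; norm_num)
  rcases h0.lt_or_eq with h | h
  · exact h
  · exfalso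
    have h1 := sin_ψ hp
    rw [← h, Real.sin_zero] at h1
    have h2 := abs_ζ_pos hp
    have : (0:ℝ) < 1 / ‖ζ p‖ := by positivity
    linarith

lemma ψ_le {p : Q} (hp : Good p) : ψ p ≤ π/2 :=
  Complex.arg_le_pi_div_two_iff.2 (Or.inl (by rw [ζ_re]; exact ip_nonneg hp))

lemma φ_eq {p : Q} (hp : Good p) : φ p = Real.sin (ψ p) * Real.cos (ψ p) := by
  rw [sin_ψ hp, cos_ψ hp, φ, div_mul_div_comm, one_mul, ← sq, abs_ζ_sq hp]

lemma ψ_split {p : Q} (hp : Good p) : ψ (cL p) + ψ (cR p) = ψ p := by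
  have hL := good_cL hp
  have hR := good_cR hp
  have key : ζ (cL p) * ζ (cR p) = (Z p : ℂ) * ζ p := by
    have hzw : zz (cL p) = zz p := by simp [cL, zz]
    have hwL : ww (cL p) = zz p + ww p := by
      simp only [cL, zz, ww]; push_cast; ring
    have hzR : zz (cR p) = zz p + ww p := by
      simp only [cR, zz, ww]; push_cast; ring
    have hwR : ww (cR p) = ww p := by simp [cR, ww]
    have hnorm : ((Z p : ℂ)) = (zz p + ww p) * conj (zz p + ww p) := by
      rw [Complex.mul_conj]
      norm_cast
      simp only [Complex.normSq_apply, zz, ww, Z]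
      push_cast
      simp [Complex.add_re, Complex.add_im]
      ring
    rw [ζ, ζ, ζ, hzw, hwL, hzR, hwR, hnorm]
    rw [map_add]
    ring
  have harg : (ζ (cL p) * ζ (cR p)).arg = ψ (cL p) + ψ (cR p) := by
    apply Complex.arg_mul (ζ_ne hL) (ζ_ne hR)
    rw [Set.mem_Ioc]
    have h1 := ψ_pos hL; have h2 := ψ_pos hR
    have h3 := ψ_le hL; have h4 := ψ_le hR
    have h5 := Real.pi_pos
    constructor <;> [skip; skip] <;> simp only [ψ] at h1 h2 h3 h4 ⊢ <;> linarith
  have h6 : (ζ (cL p) * ζ (cR p)).arg = ψ p := by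
    rw [key, ψ, Complex.arg_real_mul _ (Z_pos hp)]
  linarith

lemma alg_key (a b c d : ℝ) (h : a*d - b*c = 1)
    (hX : 0 < a^2+b^2) (hY : 0 < c^2+d^2) (hZ : 0 < (a+c)^2+(b+d)^2) :
    2 * (1/((a^2+b^2)*((c^2+d^2))*((a+c)^2+(b+d)^2))) =
      (a*(a+c)+b*(b+d))/((a^2+b^2)*((a+c)^2+(b+d)^2))
      + ((a+c)*c+(b+d)*d)/(((a+c)^2+(b+d)^2)*(c^2+d^2))
      - (a*c+b*d)/((a^2+b^2)*(c^2+d^2)) := by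
  rw [div_add_div _ _ (by positivity) (by positivity),
      div_sub_div _ _ (by positivity) (by positivity), mul_one_div,
      div_eq_div_iff (by positivity) (by positivity)]
  linear_combination (-2*(a*d-b*c+1))*(((a^2+b^2)*(c^2+d^2)*((a+c)^2+(b+d)^2))^2) * h

lemma f_identity {p : Q} (hp : Good p) :
    2 * f p = φ (cL p) + φ (cR p) - φ p := by
  have hX := X_pos hp
  have hY := Y_pos hp
  have hZ := Z_pos hp
  have hdet : (p.1:ℝ) * (p.2.2.2:ℝ) - (p.2.1:ℝ) * (p.2.2.1:ℝ) = 1 := by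
    exact_mod_cast hp.2.2.2.2
  have := alg_key (p.1:ℝ) (p.2.1:ℝ) (p.2.2.1:ℝ) (p.2.2.2:ℝ) hdet
    (by simpa [X] using hX) (by simpa [Y] using hY) (by simpa [Z] using hZ)
  simp only [f, φ, X, Y, Z, cL, cR]
  push_cast
  convert this using 2 <;> push_cast <;> ring

def root : Q := (1, 0, 0, 1)

lemma good_root : Good root := by
  refine ⟨?_, ?_, ?_, ?_, ?_⟩ <;> norm_num [root]

lemma ψ_root : ψ root = π/2 := by
  have : ζ root = Complex.I := by
    simp [ζ, ww, zz, root]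
  rw [ψ, this, Complex.arg_I]

lemma φ_root : φ root = 0 := by
  simp [φ, root]

def lsum (g : Q → ℝ) : ℕ → Q → ℝ
  | 0, p => g p
  | (N+1), p => lsum g N (cL p) + lsum g N (cR p)

def psum : ℕ → Q → ℝ
  | 0, _ => 0
  | (N+1), p => f p + psum N (cL p) + psum N (cR p)

lemma lsum_psi : ∀ (N : ℕ) (p : Q), Good p → lsum ψ N p = ψ p := by
  intro N
  induction' N with n ih
  · intro p _; rfl
  · intro p hp
    show lsum ψ n (cL p) + lsum ψ n (cR p) = ψ p
    rw [ih _ (good_cL hp), ih _ (good_cR hp), ψ_split hp]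

lemma psum_eq : ∀ (N : ℕ) (p : Q), Good p → 2 * psum N p = lsum φ N p - φ p := by
  intro N
  induction' N with n ih
  · intro p _; simp [psum, lsum]
  · intro p hp
    show 2 * (f p + psum n (cL p) + psum n (cR p)) = lsum φ n (cL p) + lsum φ n (cR p) - φ p
    have h1 := ih _ (good_cL hp)
    have h2 := ih _ (good_cR hp)
    have h3 := f_identity hp
    linarith

lemma sin_ψ_pos {p : Q} (hp : Good p) : 0 < Real.sin (ψ p) := by
  rw [sin_ψ hp]
  have := abs_ζ_pos hp
  positivity

lemma cos_ψ_nonneg {p : Q} (hp : Good p) : 0 ≤ Real.cos (ψ p) :=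
  Real.cos_nonneg_of_mem_Icc ⟨by linarith [ψ_pos hp, Real.pi_pos], ψ_le hp⟩

lemma φ_nonneg {p : Q} (hp : Good p) : 0 ≤ φ p := by
  rw [φ_eq hp]
  exact mul_nonneg (le_of_lt (sin_ψ_pos hp)) (cos_ψ_nonneg hp)

lemma φ_le_ψ {p : Q} (hp : Good p) : φ p ≤ ψ p := by
  rw [φ_eq hp]
  calc Real.sin (ψ p) * Real.cos (ψ p) ≤ Real.sin (ψ p) * 1 := by
        exact mul_le_mul_of_nonneg_left (Real.cos_le_one _) (le_of_lt (sin_ψ_pos hp))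
    _ = Real.sin (ψ p) := mul_one _
    _ ≤ ψ p := Real.sin_le (le_of_lt (ψ_pos hp))

lemma lsum_φ_le : ∀ (N : ℕ) (p : Q), Good p → lsum φ N p ≤ ψ p := by
  intro N
  induction' N with n ih
  · exact fun p hp => φ_le_ψ hp
  · intro p hp
    show lsum φ n (cL p) + lsum φ n (cR p) ≤ ψ p
    have h1 := ih _ (good_cL hp)
    have h2 := ih _ (good_cR hp)
    rw [← ψ_split hp]
    linarith

lemma psum_le {N : ℕ} : psum N root ≤ π/4 := by
  have h := psum_eq N root good_root
  have h2 := lsum_φ_le N root good_root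
  have h3 := φ_root
  rw [ψ_root] at h2
  linarith

lemma nsum_cL {p : Q} (hp : Good p) : X p + Y p + 1 ≤ X (cL p) + Y (cL p) := by
  have h1 : X (cL p) = X p := by simp [cL, X]
  have h2 : Y (cL p) = Z p := by simp [cL, Y, Z]
  have := Z_eq p
  have := ip_nonneg hp
  have := X_ge hp
  linarith

lemma nsum_cR {p : Q} (hp : Good p) : X p + Y p + 1 ≤ X (cR p) + Y (cR p) := by
  have h1 : X (cR p) = Z p := by simp [cR, X, Z]
  have h2 : Y (cR p) = Y p := by simp [cR, Y]
  have := Z_eq p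
  have := ip_nonneg hp
  have := Y_ge hp
  linarith

lemma ψ_sq_le {p : Q} (hp : Good p) {k : ℝ} (hk : 0 < k) (h : k ≤ X p + Y p) :
    ψ p ^ 2 ≤ π^2 / (2*k) := by
  have hXY : k / 2 ≤ X p * Y p := by
    have hX := X_ge hp; have hY := Y_ge hp
    nlinarith
  have hXYpos : (0:ℝ) < X p * Y p := mul_pos (X_pos hp) (Y_pos hp)
  have hsin : Real.sin (ψ p) ^ 2 = 1 / (X p * Y p) := by
    rw [sin_ψ hp, div_pow, one_pow, abs_ζ_sq hp]
  have hj : 2 / π * ψ p ≤ Real.sin (ψ p) :=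
    Real.mul_le_sin (le_of_lt (ψ_pos hp)) (ψ_le hp)
  have hπ := Real.pi_pos
  have h1 : (2 / π * ψ p)^2 ≤ Real.sin (ψ p) ^2 := by
    apply sq_le_sq'
    · have h5 := ψ_pos hp
      have h6 : 0 ≤ 2 / π * ψ p := by positivity
      have := sin_ψ_pos hp
      linarith
    · exact hj
  have h2 : Real.sin (ψ p) ^ 2 ≤ 2 / k := by
    rw [hsin, div_le_div_iff₀ hXYpos hk]
    linarith
  have h4 : 4/π^2 * ψ p ^2 ≤ 2/k := by
    have h3 : (2/π*ψ p)^2 = 4/π^2 * ψ p^2 := by ring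
    linarith [h1, h2, h3.symm.le, h3.le]
  have h5 : ψ p ^ 2 = (π^2/4) * (4/π^2 * ψ p ^ 2) := by
    field_simp
  rw [h5]
  calc (π^2/4) * (4/π^2 * ψ p ^ 2) ≤ (π^2/4) * (2/k) := by
        apply mul_le_mul_of_nonneg_left h4 (by positivity)
    _ = π^2/(2*k) := by
        field_simp; ring

lemma φ_lower {p : Q} (hp : Good p) {k : ℝ} (hk : 20 ≤ k) (h : k ≤ X p + Y p) :
    (1 - π^2/(2*k)) * ψ p ≤ φ p := by
  have hπ := Real.pi_pos
  have hπ2 : π^2 ≤ 10 := by nlinarith [Real.pi_lt_d2]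
  have hsq := ψ_sq_le hp (by linarith) h
  have hψpos := ψ_pos hp
  have hc4 : π^2/(2*k) ≤ 1/4 := by
    rw [div_le_iff₀ (by linarith)]
    nlinarith
  have hψsmall : ψ p ≤ 1/2 := by
    nlinarith [sq_nonneg (ψ p - 1/2)]
  have hcube : 2 * ψ p - (2 * ψ p)^3/4 < Real.sin (2 * ψ p) :=
    by have h := Real.sin_gt_sub_cube (x := 2 * ψ p) (by linarith); have h' : 0 ≤ (2 * ψ p)^3 := by positivity
       linarith
  have h2 : Real.sin (2 * ψ p) = 2 * Real.sin (ψ p) * Real.cos (ψ p) := Real.sin_two_mul _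
  rw [φ_eq hp]
  have hc : ψ p ^3 ≤ π^2/(2*k) * ψ p := by
    have h4 : ψ p ^ 3 = ψ p ^2 * ψ p := by ring
    rw [h4]
    apply mul_le_mul_of_nonneg_right hsq (le_of_lt hψpos)
  nlinarith [hcube, h2]

lemma lsum_lower : ∀ (M N : ℕ) (p : Q), Good p → ∀ k : ℝ, 20 ≤ k →
    k ≤ X p + Y p + M → (1 - π^2/(2*k)) * ψ p ≤ lsum φ (M + N) p := by
  intro M
  induction' M with m ih
  · intro N
    induction' N with n ihn
    · intro p hp k hk h
      exact φ_lower hp hk (by simpa using h)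
    · intro p hp k hk h
      simp only [Nat.zero_add] at ihn ⊢
      show (1 - π^2/(2*k)) * ψ p ≤ lsum φ n (cL p) + lsum φ n (cR p)
      have h1 := ihn (cL p) (good_cL hp) k hk (by have := nsum_cL hp; push_cast at h ⊢; linarith)
      have h2 := ihn (cR p) (good_cR hp) k hk (by have := nsum_cR hp; push_cast at h ⊢; linarith)
      have h3 := ψ_split hp
      have h4 : (1 - π^2/(2*k)) * ψ p
          = (1 - π^2/(2*k)) * ψ (cL p) + (1 - π^2/(2*k)) * ψ (cR p) := by
        rw [← h3]; ring
      linarith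
  · intro N p hp k hk h
    rw [show m + 1 + N = (m + N) + 1 from by omega]
    show (1 - π^2/(2*k)) * ψ p ≤ lsum φ (m + N) (cL p) + lsum φ (m + N) (cR p)
    have h1 := ih N (cL p) (good_cL hp) k hk (by have := nsum_cL hp; push_cast at h ⊢; linarith)
    have h2 := ih N (cR p) (good_cR hp) k hk (by have := nsum_cR hp; push_cast at h ⊢; linarith)
    have h3 := ψ_split hp
    have h4 : (1 - π^2/(2*k)) * ψ p
        = (1 - π^2/(2*k)) * ψ (cL p) + (1 - π^2/(2*k)) * ψ (cR p) := by
      rw [← h3]; ring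
    linarith

lemma psum_lower (k : ℕ) (hk : 20 ≤ k) :
    (1 - π^2/(2*(k:ℝ))) * (π/4) ≤ psum k root := by
  have hk' : (20:ℝ) ≤ (k:ℝ) := by exact_mod_cast hk
  have hroot : X root + Y root = 2 := by norm_num [X, Y, root]
  have h := lsum_lower k 0 root good_root k hk' (by rw [hroot]; push_cast; linarith)
  rw [Nat.add_zero, ψ_root] at h
  have h2 := psum_eq k root good_root
  rw [φ_root] at h2
  have hπ := Real.pi_pos
  nlinarith [h, h2]

def nodeFrom : Q → List Bool → Q
  | p, [] => p
  | p, (b :: l) => nodeFrom (if b then cR p else cL p) l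

lemma good_nodeFrom : ∀ (l : List Bool) (p : Q), Good p → Good (nodeFrom p l) := by
  intro l
  induction' l with b t ih
  · exact fun p hp => hp
  · intro p hp
    show Good (nodeFrom (if b then cR p else cL p) t)
    apply ih
    cases b
    · simpa using good_cL hp
    · simpa using good_cR hp

lemma nodeFrom_append (b : Bool) : ∀ (l : List Bool) (p : Q),
    nodeFrom p (l ++ [b]) = (if b then cR else cL) (nodeFrom p l) := by
  intro l
  induction' l with a t ih
  · intro p; cases b <;> rfl
  · intro p
    show nodeFrom _ (t ++ [b]) = _
    rw [ih]
    rfl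

lemma XY_cL {q : Q} (hq : Good q) : X (cL q) < Y (cL q) := by
  have h1 : X (cL q) = X q := by simp [cL, X]
  have h2 : Y (cL q) = Z q := by simp [cL, Y, Z]
  have := Z_eq q
  have := ip_nonneg hq
  have := Y_ge hq
  linarith

lemma XY_cR {q : Q} (hq : Good q) : Y (cR q) < X (cR q) := by
  have h1 : X (cR q) = Z q := by simp [cR, X, Z]
  have h2 : Y (cR q) = Y q := by simp [cR, Y]
  have := Z_eq q
  have := ip_nonneg hq
  have := X_ge hq
  linarith

lemma cL_inj {q q' : Q} (h : cL q = cL q') : q = q' := by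
  simp only [cL, Prod.ext_iff] at h ⊢
  omega

lemma cR_inj {q q' : Q} (h : cR q = cR q') : q = q' := by
  simp only [cR, Prod.ext_iff] at h ⊢
  omega

def node (l : List Bool) : Q := nodeFrom root l

lemma good_node (l : List Bool) : Good (node l) := good_nodeFrom l root good_root

lemma node_append_false (l : List Bool) : node (l ++ [false]) = cL (node l) :=
  nodeFrom_append false l root

lemma node_append_true (l : List Bool) : node (l ++ [true]) = cR (node l) :=
  nodeFrom_append true l root

lemma node_nil : node [] = root := rfl

lemma XY_node_ne_nil (t : List Bool) (b : Bool) : node (t ++ [b]) ≠ node [] := by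
  intro h
  rw [node_nil] at h
  have hroot : X root = Y root := by norm_num [X, Y, root]
  have hg := good_node t
  cases b
  · rw [node_append_false] at h
    have h1 := XY_cL hg
    rw [h] at h1
    linarith
  · rw [node_append_true] at h
    have h1 := XY_cR hg
    rw [h] at h1
    linarith

lemma node_inj : ∀ l l' : List Bool, node l = node l' → l = l' := by
  intro l
  induction' l using List.reverseRecOn with s a ih
  · intro l'
    induction' l' using List.reverseRecOn with t b _
    · intro _; rfl
    · intro h
      exact absurd h.symm (XY_node_ne_nil t b)
  · intro l'
    induction' l' using List.reverseRecOn with t b _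
    · intro h
      exact absurd h (XY_node_ne_nil s a)
    · intro h
      have hgs := good_node s
      have hgt := good_node t
      have hab : a = b := by
        cases a <;> cases b
        · rfl
        · exfalso
          rw [node_append_false, node_append_true] at h
          have h1 := XY_cL hgs
          have h2 := XY_cR hgt
          rw [h] at h1
          linarith
        · exfalso
          rw [node_append_true, node_append_false] at h
          have h1 := XY_cR hgs
          have h2 := XY_cL hgt
          rw [h] at h1
          linarith
        · rfl
      subst hab
      have hst : node s = node t := by
        cases a
        · rw [node_append_false, node_append_false] at h
          exact cL_inj h
        · rw [node_append_true, node_append_true] at h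
          exact cR_inj h
      rw [ih t hst]

lemma good_mk {a b c d : ℤ} (h1 : 0 ≤ a) (h2 : 0 ≤ b) (h3 : 0 ≤ c) (h4 : 0 ≤ d)
    (h5 : a*d - b*c = 1) : Good (a, b, c, d) := ⟨h1, h2, h3, h4, h5⟩

lemma p_eta (p : Q) : p = (p.1, p.2.1, p.2.2.1, p.2.2.2) := rfl

lemma decomp {p : Q} (hp : Good p) (hne : p ≠ root) :
    (p.2.2.1 ≤ p.1 ∧ p.2.2.2 ≤ p.2.1) ∨ (p.1 ≤ p.2.2.1 ∧ p.2.1 ≤ p.2.2.2) := by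
  obtain ⟨h1, h2, h3, h4, h5⟩ := hp
  have ha := good_a ⟨h1, h2, h3, h4, h5⟩
  have hd := good_d ⟨h1, h2, h3, h4, h5⟩
  rcases le_or_gt p.1 p.2.2.1 with hac | hca
  · -- a ≤ c : claim b ≤ d
    rcases le_or_gt p.2.1 p.2.2.2 with hbd | hdb
    · exact Or.inr ⟨hac, hbd⟩
    · -- a ≤ c and d < b : det ≤ -a < 0, contradiction
      exfalso
      have f1 : p.1 * p.2.2.2 ≤ p.1 * (p.2.1 - 1) :=
        mul_le_mul_of_nonneg_left (by omega) h1
      have f2 : p.1 * p.2.1 ≤ p.2.2.1 * p.2.1 :=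
        mul_le_mul_of_nonneg_right hac h2
      nlinarith
  · -- c < a
    rcases le_or_gt p.2.2.2 p.2.1 with hdb | hbd
    · exact Or.inl ⟨le_of_lt hca, hdb⟩
    · -- c < a and b < d : p must be root
      exfalso
      have key : (p.2.2.1 + 1) * (p.2.1 + 1) ≤ p.1 * p.2.2.2 :=
        mul_le_mul (by omega) (by omega) (by omega) (by omega)
      have hb0 : p.2.1 = 0 := by nlinarith
      have hc0 : p.2.2.1 = 0 := by nlinarith
      have had : p.1 * p.2.2.2 = 1 := by
        linear_combination h5 + p.2.2.1 * hb0
      have ha1 : p.1 = 1 := by nlinarith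
      have hd1 : p.2.2.2 = 1 := by nlinarith
      apply hne
      rw [p_eta p, ha1, hb0, hc0, hd1]
      rfl

lemma reach : ∀ (n : ℕ) (p : Q), Good p → p.2.1 + p.2.2.1 ≤ (n:ℤ) → ∃ l, node l = p := by
  intro n
  induction' n with n ih
  · intro p hp hm
    have ha := good_a hp
    have hd := good_d hp
    obtain ⟨h1, h2, h3, h4, h5⟩ := hp
    have hb : p.2.1 = 0 := by omega
    have hc : p.2.2.1 = 0 := by omega
    have had : p.1 * p.2.2.2 = 1 := by
      linear_combination h5 + p.2.2.1 * hb
    have ha1 : p.1 = 1 := by nlinarith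
    have hd1 : p.2.2.2 = 1 := by nlinarith
    refine ⟨[], ?_⟩
    rw [node_nil, p_eta p, ha1, hb, hc, hd1]
    rfl
  · intro p hp hm
    by_cases hr : p = root
    · exact ⟨[], hr ▸ node_nil⟩
    · have ha := good_a hp
      have hd := good_d hp
      obtain ⟨h1, h2, h3, h4, h5⟩ := hp
      rcases decomp ⟨h1, h2, h3, h4, h5⟩ hr with ⟨hca, hdb⟩ | ⟨hac, hbd⟩
      · -- p = cR q
        have hgq : Good (p.1 - p.2.2.1, p.2.1 - p.2.2.2, p.2.2.1, p.2.2.2) :=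
          good_mk (by omega) (by omega) h3 h4 (by linear_combination h5)
        obtain ⟨l, hl⟩ := ih _ hgq (by push_cast at hm ⊢; show p.2.1 - p.2.2.2 + p.2.2.1 ≤ (n:ℤ); omega)
        refine ⟨l ++ [true], ?_⟩
        rw [node_append_true, hl]
        show (p.1 - p.2.2.1 + p.2.2.1, p.2.1 - p.2.2.2 + p.2.2.2, p.2.2.1, p.2.2.2) = p
        have e1 : p.1 - p.2.2.1 + p.2.2.1 = p.1 := by omega
        have e2 : p.2.1 - p.2.2.2 + p.2.2.2 = p.2.1 := by omega
        rw [e1, e2]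
      · -- p = cL q
        have hgq : Good (p.1, p.2.1, p.2.2.1 - p.1, p.2.2.2 - p.2.1) :=
          good_mk h1 h2 (by omega) (by omega) (by linear_combination h5)
        obtain ⟨l, hl⟩ := ih _ hgq (by push_cast at hm ⊢; show p.2.1 + (p.2.2.1 - p.1) ≤ (n:ℤ); omega)
        refine ⟨l ++ [false], ?_⟩
        rw [node_append_false, hl]
        show (p.1, p.2.1, p.1 + (p.2.2.1 - p.1), p.2.1 + (p.2.2.2 - p.2.1)) = p
        have e1 : p.1 + (p.2.2.1 - p.1) = p.2.2.1 := by omega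
        have e2 : p.2.1 + (p.2.2.2 - p.2.1) = p.2.2.2 := by omega
        rw [e1, e2]

lemma node_surj (p : Q) (hp : Good p) : ∃ l, node l = p := by
  have h2 := hp.2.1
  have h3 := hp.2.2.1
  exact reach (p.2.1 + p.2.2.1).toNat p hp (by omega)

open Finset in
def wordsLt : ℕ → Finset (List Bool)
  | 0 => ∅
  | (N+1) => {([] : List Bool)} ∪ (wordsLt N).image (List.cons false)
      ∪ (wordsLt N).image (List.cons true)

lemma mem_wordsLt : ∀ (N : ℕ) (w : List Bool), w ∈ wordsLt N ↔ w.length < N := by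
  intro N
  induction' N with n ih
  · intro w; simp [wordsLt]
  · intro w
    cases' w with b t
    · simp [wordsLt]
    · simp only [wordsLt, Finset.mem_union, Finset.mem_image, Finset.mem_singleton,
        List.cons.injEq, List.length_cons]
      constructor
      · rintro ((h | ⟨u, hu, hb, ht⟩) | ⟨u, hu, hb, ht⟩)
        · exact absurd h (by simp)
        · subst ht; exact Nat.succ_lt_succ ((ih u).1 hu)
        · subst ht; exact Nat.succ_lt_succ ((ih u).1 hu)
      · intro h
        have ht : t.length < n := Nat.lt_of_succ_lt_succ h
        cases b
        · exact Or.inl (Or.inr ⟨t, (ih t).2 ht, rfl, rfl⟩)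
        · exact Or.inr ⟨t, (ih t).2 ht, rfl, rfl⟩

lemma nodeFrom_cons_false (p : Q) (w : List Bool) :
    nodeFrom p (false :: w) = nodeFrom (cL p) w := rfl

lemma nodeFrom_cons_true (p : Q) (w : List Bool) :
    nodeFrom p (true :: w) = nodeFrom (cR p) w := rfl

lemma sum_nodeFrom : ∀ (N : ℕ) (p : Q),
    ∑ w ∈ wordsLt N, f (nodeFrom p w) = psum N p := by
  intro N
  induction' N with n ih
  · intro p; simp [wordsLt, psum]
  · intro p
    have d1 : Disjoint ({([] : List Bool)} : Finset (List Bool))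
        ((wordsLt n).image (List.cons false)) := by
      simp [Finset.disjoint_left]
    have d2 : Disjoint (({([] : List Bool)} : Finset (List Bool))
        ∪ (wordsLt n).image (List.cons false)) ((wordsLt n).image (List.cons true)) := by
      rw [Finset.disjoint_union_left]
      constructor
      · simp [Finset.disjoint_left]
      · rw [Finset.disjoint_left]
        rintro x hx hx'
        simp only [Finset.mem_image] at hx hx'
        obtain ⟨u, _, hu⟩ := hx
        obtain ⟨v, _, hv⟩ := hx'
        rw [← hv] at hu
        simp at hu
    show ∑ w ∈ _ ∪ _ ∪ _, f (nodeFrom p w) = f p + psum n (cL p) + psum n (cR p)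
    rw [Finset.sum_union d2, Finset.sum_union d1, Finset.sum_singleton,
      Finset.sum_image (by intro x _ y _ h; simpa using h),
      Finset.sum_image (by intro x _ y _ h; simpa using h)]
    simp only [nodeFrom_cons_false, nodeFrom_cons_true]
    rw [ih (cL p), ih (cR p)]
    rfl

lemma T_eq_good (p : Q) : p ∈ T ↔ Good p := Iff.rfl

theorem stmt_8 :
    HasSum
      (fun p : T =>
        1 / (((p.val.1 : ℝ) ^ 2 + (p.val.2.1 : ℝ) ^ 2) *
          ((p.val.2.2.1 : ℝ) ^ 2 + (p.val.2.2.2 : ℝ) ^ 2) *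
          (((p.val.1 : ℝ) + (p.val.2.2.1 : ℝ)) ^ 2 +
            ((p.val.2.1 : ℝ) + (p.val.2.2.2 : ℝ)) ^ 2)))
      (Real.pi / 4) := by
  classical
  set F : T → ℝ := (fun p : T =>
        1 / (((p.val.1 : ℝ) ^ 2 + (p.val.2.1 : ℝ) ^ 2) *
          ((p.val.2.2.1 : ℝ) ^ 2 + (p.val.2.2.2 : ℝ) ^ 2) *
          (((p.val.1 : ℝ) + (p.val.2.2.1 : ℝ)) ^ 2 +
            ((p.val.2.1 : ℝ) + (p.val.2.2.2 : ℝ)) ^ 2))) with hF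
  have hFf : ∀ t : T, F t = f t.val := fun t => rfl
  have hFnonneg : ∀ t : T, 0 ≤ F t := by
    intro t
    rw [hFf]
    unfold f X Y Z
    positivity
  apply hasSum_of_isLUB_of_nonneg _ hFnonneg
  set e : List Bool → T := fun w => ⟨node w, (T_eq_good _).mpr (good_node w)⟩ with he
  have he_inj : Function.Injective e := by
    intro w w' h
    apply node_inj
    exact congrArg Subtype.val h
  have hsum : ∀ N : ℕ, ∑ t ∈ (wordsLt N).image e, F t = psum N root := by
    intro N
    rw [Finset.sum_image (fun x _ y _ h => he_inj h)]
    have : ∀ w, F (e w) = f (node w) := fun w => rfl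
    simp only [this]
    exact sum_nodeFrom N root
  constructor
  · rintro x ⟨s, rfl⟩
    have hchoice : ∀ t : T, ∃ l, e l = t := by
      intro t
      obtain ⟨l, hl⟩ := node_surj t.val ((T_eq_good _).mp t.2)
      exact ⟨l, Subtype.ext hl⟩
    choose wrd hwrd using hchoice
    set N := (s.sup fun t => (wrd t).length) + 1 with hN
    have hsub : s ⊆ (wordsLt N).image e := by
      intro t ht
      rw [Finset.mem_image]
      refine ⟨wrd t, (mem_wordsLt _ _).2 ?_, hwrd t⟩
      exact Nat.lt_succ_of_le (Finset.le_sup (f := fun t => (wrd t).length) ht)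
    calc ∑ t ∈ s, F t ≤ ∑ t ∈ (wordsLt N).image e, F t :=
          Finset.sum_le_sum_of_subset_of_nonneg hsub (fun t _ _ => hFnonneg t)
      _ = psum N root := hsum N
      _ ≤ π/4 := psum_le
  · intro b hb
    have hball : ∀ N : ℕ, psum N root ≤ b := by
      intro N
      have h := hb ⟨(wordsLt N).image e, rfl⟩
      rw [← hsum N]
      exact h
    have h0 : Filter.Tendsto (fun k : ℕ => π^2/(2*(k:ℝ))) Filter.atTop (nhds 0) := by
      have h := tendsto_const_div_atTop_nhds_zero_nat (π^2/2)
      have heq : (fun k : ℕ => π^2/(2*(k:ℝ))) = fun k : ℕ => (π^2/2)/(k:ℝ) := by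
        funext k
        rw [div_div]
      rw [heq]
      exact h
    have htend : Filter.Tendsto (fun k : ℕ => (1 - π^2/(2*(k:ℝ))) * (π/4))
        Filter.atTop (nhds (π/4)) := by
      have h1 := (tendsto_const_nhds (x := (1:ℝ)) (f := Filter.atTop (α := ℕ))).sub h0
      have h2 := h1.mul_const (π/4)
      simpa using h2
    apply le_of_tendsto htend
    filter_upwards [Filter.eventually_ge_atTop 20] with k hk
    exact le_trans (psum_lower k hk) (hball k)
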